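/- The disjoint union of countably infinitely many copies of the countably infinite complete graph is MB-homogeneous. -/

import Mathlib

/-- MB-homogeneity: every monomorphism between finite induced subgraphs of `Γ`
extends to a bijective endomorphism of `Γ`. -/
def MBHomogeneous {V : Type*} (Γ : SimpleGraph V) : Prop :=
  ∀ (A : Finset V) (f : V → V), Set.InjOn f A →
    (∀ u ∈ A, ∀ v ∈ A, Γ.Adj u v → Γ.Adj (f u) (f v)) →
    ∃ g : V ≃ V, (∀ u v, Γ.Adj u v → Γ.Adj (g u) (g v)) ∧ ∀ a ∈ A, g a = f a

/-- The disjoint union of countably infinitely many copies of the countably infinite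
complete graph: vertices `ℕ × ℕ`, with `(i,m) ~ (j,n)` iff `i = j` and `m ≠ n`. -/
def unionOfCliques : SimpleGraph (ℕ × ℕ) where
  Adj p q := p.1 = q.1 ∧ p.2 ≠ q.2
  symm := by
    constructor
    intro p q h
    exact ⟨h.1.symm, h.2.symm⟩
  loopless := by
    constructor
    intro p h
    exact h.2 rfl

/-- A finite partial injection between countably infinite types extends to a bijection. -/
theorem extend_finite_injOn {α β : Type*} [Countable α] [Infinite α] [Countable β] [Infinite β]
    (s : Set α) (hs : s.Finite) (p : α → β) (hp : Set.InjOn p s) :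
    ∃ e : α ≃ β, ∀ a ∈ s, e a = p a := by
  classical
  have ht : (p '' s).Finite := hs.image p
  have h1 : Infinite ↥(sᶜ) := hs.infinite_compl.to_subtype
  have h2 : Infinite ↥((p '' s)ᶜ) := ht.infinite_compl.to_subtype
  obtain ⟨ec⟩ : Nonempty (↥(sᶜ) ≃ ↥((p '' s)ᶜ)) := nonempty_equiv_of_countable
  let im : ↥s ≃ ↥(p '' s) := Equiv.Set.imageOfInjOn p s hp
  refine ⟨(Equiv.Set.sumCompl s).symm.trans ((Equiv.sumCongr im ec).trans
    (Equiv.Set.sumCompl (p '' s))), ?_⟩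
  intro a ha
  simp [Equiv.Set.sumCompl_symm_apply_of_mem ha, im, Equiv.Set.imageOfInjOn]

/-- The disjoint union of infinitely many infinite complete graphs is MB-homogeneous. -/
theorem stmt_11 : MBHomogeneous unionOfCliques := by
  classical
  intro A f hinj hhom
  -- bound on first coordinates of A
  set N : ℕ := A.sup (fun a => a.1) + 1 with hN
  have hbound : ∀ a ∈ A, a.1 < N := fun a ha =>
    Nat.lt_succ_of_le (Finset.le_sup (f := fun a => a.1) ha)
  -- the column map
  let σ : ℕ → ℕ := fun i =>
    if h : ∃ a ∈ A, a.1 = i then (f h.choose).1 else i - N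
  -- key property of σ on A
  have hσA : ∀ a ∈ A, σ a.1 = (f a).1 := by
    intro a ha
    have hex : ∃ b ∈ A, b.1 = a.1 := ⟨a, ha, rfl⟩
    obtain ⟨hbA, hb1⟩ := hex.choose_spec
    simp only [σ, dif_pos hex]
    by_cases hab : hex.choose = a
    · rw [hab]
    · have hadj : unionOfCliques.Adj hex.choose a := by
        refine ⟨hb1, fun h2 => hab ?_⟩
        exact Prod.ext hb1 h2
      exact (hhom _ hbA _ ha hadj).1
  have hσsurj : Function.Surjective σ := by
    intro k
    refine ⟨k + N, ?_⟩
    have hni : ¬ ∃ a ∈ A, a.1 = k + N := by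
      rintro ⟨a, ha, h1⟩
      have := hbound a ha
      omega
    simp only [σ, dif_neg hni]
    omega
  -- fibers
  let Fib : ℕ → Type := fun k => {i : ℕ // σ i = k} × ℕ
  have hFibInf : ∀ k, Infinite (Fib k) := by
    intro k
    obtain ⟨i, hi⟩ := hσsurj k
    haveI : Nonempty {i : ℕ // σ i = k} := ⟨⟨i, hi⟩⟩
    exact Prod.infinite_of_right
  -- finite partial data on each fiber
  have key : ∀ k, ∃ e : Fib k ≃ ℕ,
      ∀ x : Fib k, (x.1.1, x.2) ∈ A → e x = (f (x.1.1, x.2)).2 := by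
    intro k
    haveI := hFibInf k
    let π : Fib k → ℕ × ℕ := fun x => (x.1.1, x.2)
    have hπinj : Function.Injective π := by
      rintro ⟨⟨i, hi⟩, m⟩ ⟨⟨j, hj⟩, n⟩ h
      simp only [π, Prod.mk.injEq] at h
      simp [h.1, h.2]
    let s : Set (Fib k) := π ⁻¹' (A : Set (ℕ × ℕ))
    have hs : s.Finite := Set.Finite.preimage hπinj.injOn A.finite_toSet
    let p : Fib k → ℕ := fun x => (f (π x)).2
    have hp : Set.InjOn p s := by
      intro x hx y hy hpxy
      have hx' : π x ∈ A := hx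
      have hy' : π y ∈ A := hy
      have h1x : (f (π x)).1 = k := by
        have := hσA (π x) hx'
        simpa [π, x.1.2] using this.symm
      have h1y : (f (π y)).1 = k := by
        have := hσA (π y) hy'
        simpa [π, y.1.2] using this.symm
      have : f (π x) = f (π y) := Prod.ext (h1x.trans h1y.symm) hpxy
      exact hπinj (hinj hx' hy' this)
    obtain ⟨e, he⟩ := extend_finite_injOn s hs p hp
    exact ⟨e, fun x hx => he x hx⟩
  choose e he using key
  -- assemble the global equiv
  let E1 : ℕ × ℕ ≃ Σ k, Fib k :=
    { toFun := fun x => ⟨σ x.1, ⟨x.1, rfl⟩, x.2⟩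
      invFun := fun x => (x.2.1.1, x.2.2)
      left_inv := fun x => rfl
      right_inv := by
        rintro ⟨k, ⟨i, hi⟩, m⟩
        subst hi
        rfl }
  let E2 : (Σ k, Fib k) ≃ Σ _ : ℕ, ℕ := Equiv.sigmaCongrRight e
  let g : ℕ × ℕ ≃ ℕ × ℕ := E1.trans (E2.trans (Equiv.sigmaEquivProd ℕ ℕ))
  have hg : ∀ x : ℕ × ℕ, g x = (σ x.1, e (σ x.1) ⟨⟨x.1, rfl⟩, x.2⟩) := fun x => rfl
  refine ⟨g, ?_, ?_⟩
  · rintro ⟨i, m⟩ ⟨j, n⟩ ⟨h1, h2⟩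
    dsimp at h1 h2
    subst h1
    rw [hg, hg]
    refine ⟨rfl, ?_⟩
    dsimp only
    intro hEq
    have := (e (σ i)).injective hEq
    exact h2 (congrArg Prod.snd this)
  · intro a ha
    rw [hg]
    have h1 : σ a.1 = (f a).1 := hσA a ha
    have h2 := he (σ a.1) ⟨⟨a.1, rfl⟩, a.2⟩ (by simpa using ha)
    simp only at h2
    rw [h2]
    have : ((a.1 : ℕ), a.2) = a := rfl
    rw [this, h1]
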